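/- Let Γ be a restricted-normal digraph of order n with adjacency matrix A (i.e., its Laplacian L is not a normal matrix but QᴴLQ is normal for a restrictor matrix Q of order n). For k ≥ 1, let Γ̂ be the digraph of order nk on vertex set Fin n × Fin k whose adjacency matrix is the Kronecker product Â = A ⊗ J_k, i.e. Â (i,p) (j,q) = A i j for all p, q ∈ Fin k. Then Γ̂ is restricted-normal: its Laplacian L̂ is not normal but Q̂ᴴL̂Q̂ is normal for a restrictor matrix Q̂ of order nk. Furthermore, Γ̂ is a directed join if and only if Γ is a directed join. -/
import Mathlib


open Matrix

/-- A 0/1 adjacency matrix with zero diagonal. -/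
def IsAdj {m : Type*} [Fintype m] (A : Matrix m m ℝ) : Prop :=
  (∀ i j, A i j = 0 ∨ A i j = 1) ∧ ∀ i, A i i = 0

/-- Laplacian of a digraph: `L i i = d⁺(i)` and `L i j = -A i j` for `i ≠ j`. -/
noncomputable def lap {m : Type*} [Fintype m] [DecidableEq m] (A : Matrix m m ℝ) :
    Matrix m m ℝ :=
  Matrix.diagonal (fun i => ∑ j, A i j) - A

/-- Complexified Laplacian. -/
noncomputable def lapC {m : Type*} [Fintype m] [DecidableEq m] (A : Matrix m m ℝ) :
    Matrix m m ℂ :=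
  (lap A).map (fun x => (x : ℂ))

/-- Restricted numerical range `W_r(M) = { xᴴ M x : ‖x‖ = 1, xᴴ e = 0 }`. -/
noncomputable def rnr {m : Type*} [Fintype m] (M : Matrix m m ℂ) : Set ℂ :=
  { z | ∃ x : EuclideanSpace ℂ m, ‖x‖ = 1 ∧ star (x : m → ℂ) ⬝ᵥ (fun _ => (1 : ℂ)) = 0 ∧
      z = star (x : m → ℂ) ⬝ᵥ M.mulVec (x : m → ℂ) }

/-- Restrictor matrix: orthonormal columns, all orthogonal to the all-ones vector. -/
def IsRestrictor {m k : Type*} [Fintype m] [Fintype k] [DecidableEq k]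
    (Q : Matrix m k ℂ) : Prop :=
  Qᴴ * Q = 1 ∧ Qᴴ *ᵥ (fun _ => (1 : ℂ)) = 0

/-- Normal matrix: `Mᴴ M = M Mᴴ` (for real matrices, `Mᵀ M = M Mᵀ`). -/
def IsNormalM {m R : Type*} [Fintype m] [Mul (Matrix m m R)] [Star (Matrix m m R)]
    (M : Matrix m m R) : Prop := star M * M = M * star M

/-- Balanced digraph: `d⁺(i) = d⁻(i)` for every vertex. -/
def Bal {m : Type*} [Fintype m] (A : Matrix m m ℝ) : Prop :=
  ∀ i, ∑ j, A i j = ∑ j, A j i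

noncomputable def allJ (m : Type*) : Matrix m m ℂ := Matrix.of fun _ _ => 1

lemma restrictor_colsum {m k : Type*} [Fintype m] [Fintype k] [DecidableEq k]
    {Q : Matrix m k ℂ} (hQ : IsRestrictor Q) (a : k) : ∑ i, star (Q i a) = 0 := by
  have := congrFun hQ.2 a
  simpa [Matrix.mulVec, dotProduct, Matrix.conjTranspose_apply] using this

lemma restrictor_gram {m : Type*} [Fintype m] [DecidableEq m] {c : ℕ}
    (hc : Fintype.card m = c) (hc1 : 1 ≤ c)
    (Q : Matrix m (Fin (c - 1)) ℂ) (hQ : IsRestrictor Q) :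
    Q * Qᴴ = 1 - ((c : ℂ))⁻¹ • allJ m := by
  have hcC : (c : ℂ) ≠ 0 := Nat.cast_ne_zero.2 (by omega)
  set s : ℂ := (((Real.sqrt c : ℝ)) : ℂ)⁻¹ with hs
  have hstar : star s = s := by
    simp [hs, ← Complex.ofReal_inv]
  have hss : s * s = (c : ℂ)⁻¹ := by
    rw [hs, ← mul_inv, ← Complex.ofReal_mul, Real.mul_self_sqrt (by positivity)]
    norm_num
  set U : Matrix m (Fin (c - 1) ⊕ Unit) ℂ :=
    Matrix.of (fun i x => Sum.elim (fun a => Q i a) (fun _ => s) x) with hU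
  have hUU : Uᴴ * U = 1 := by
    ext x y
    cases x with
    | inl a =>
      cases y with
      | inl b =>
        have := congrFun (congrFun hQ.1 a) b
        simp only [Matrix.mul_apply, Matrix.conjTranspose_apply] at this ⊢
        simpa [hU, Matrix.one_apply] using this
      | inr u =>
        simp only [Matrix.mul_apply, Matrix.conjTranspose_apply, hU, Matrix.of_apply,
          Sum.elim_inl, Sum.elim_inr, Matrix.one_apply]
        rw [← Finset.sum_mul, restrictor_colsum hQ a, zero_mul]
        simp
    | inr u =>
      cases y with
      | inl b =>
        simp only [Matrix.mul_apply, Matrix.conjTranspose_apply, hU, Matrix.of_apply,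
          Sum.elim_inl, Sum.elim_inr, Matrix.one_apply]
        rw [← Finset.mul_sum]
        have : ∑ i, Q i b = 0 := by
          have := restrictor_colsum hQ b
          have := congrArg star this
          simpa using this
        rw [this, mul_zero]
        simp
      | inr v =>
        simp only [Matrix.mul_apply, Matrix.conjTranspose_apply, hU, Matrix.of_apply,
          Sum.elim_inr, Matrix.one_apply, hstar, hss]
        simp [Finset.sum_const, hc, nsmul_eq_mul, mul_inv_cancel₀ hcC]
  have e : m ≃ (Fin (c - 1) ⊕ Unit) := Fintype.equivOfCardEq (by simp [hc]; omega)
  have hUUt : U * Uᴴ = 1 := (Matrix.mul_eq_one_comm_of_equiv e).mpr hUU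
  ext i i'
  have h := congrFun (congrFun hUUt i) i'
  rw [Matrix.mul_apply, Fintype.sum_sum_type] at h
  simp only [Matrix.conjTranspose_apply, hU, Matrix.of_apply, Sum.elim_inl, Sum.elim_inr] at h
  rw [Finset.sum_const] at h
  simp only [Finset.card_univ, Fintype.card_unit, one_smul, hstar, hss] at h
  have : (Q * Qᴴ) i i' + (c : ℂ)⁻¹ = (1 : Matrix m m ℂ) i i' := by
    rw [Matrix.mul_apply]
    simpa [Matrix.conjTranspose_apply] using h
  simp only [Matrix.sub_apply, Matrix.smul_apply, allJ, Matrix.of_apply, smul_eq_mul, mul_one]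
  exact eq_sub_of_add_eq this

lemma restrictor_J {m k : Type*} [Fintype m] [Fintype k] [DecidableEq k]
    {Q : Matrix m k ℂ} (hQ : IsRestrictor Q) : Qᴴ * allJ m = 0 := by
  ext a j
  simp only [Matrix.mul_apply, Matrix.conjTranspose_apply, allJ, Matrix.of_apply, mul_one,
    Matrix.zero_apply]
  exact restrictor_colsum hQ a

lemma J_restrictor {m k : Type*} [Fintype m] [Fintype k] [DecidableEq k]
    {Q : Matrix m k ℂ} (hQ : IsRestrictor Q) : allJ m * Q = 0 := by
  have hJ : (allJ m)ᴴ = allJ m := by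
    ext i j; simp [allJ, Matrix.conjTranspose_apply]
  have := congrArg Matrix.conjTranspose (restrictor_J hQ)
  rwa [Matrix.conjTranspose_mul, hJ, Matrix.conjTranspose_conjTranspose,
    Matrix.conjTranspose_zero] at this

lemma normal_sandwich {m : Type*} [Fintype m] [DecidableEq m] {c : ℕ}
    (hc : Fintype.card m = c) (hc1 : 1 ≤ c)
    (Q : Matrix m (Fin (c - 1)) ℂ) (hQ : IsRestrictor Q) (M : Matrix m m ℂ) :
    IsNormalM (Qᴴ * M * Q) ↔
      (1 - ((c : ℂ))⁻¹ • allJ m) *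
        (Mᴴ * ((1 - ((c : ℂ))⁻¹ • allJ m) * M) - M * ((1 - ((c : ℂ))⁻¹ • allJ m) * Mᴴ)) *
        (1 - ((c : ℂ))⁻¹ • allJ m) = 0 := by
  set P : Matrix m m ℂ := 1 - ((c : ℂ))⁻¹ • allJ m with hPdef
  set K : Matrix m m ℂ := Mᴴ * (P * M) - M * (P * Mᴴ) with hKdef
  have hP : Q * Qᴴ = P := restrictor_gram hc hc1 Q hQ
  have hQP : Qᴴ * P = Qᴴ := by
    rw [hPdef, Matrix.mul_sub, Matrix.mul_one, Matrix.mul_smul, restrictor_J hQ]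
    simp
  have hPQ : P * Q = Q := by
    rw [hPdef, Matrix.sub_mul, Matrix.one_mul, Matrix.smul_mul, J_restrictor hQ]
    simp
  have expand : Qᴴ * K * Q =
      Qᴴ * (Mᴴ * Q) * (Qᴴ * (M * Q)) - Qᴴ * (M * Q) * (Qᴴ * (Mᴴ * Q)) := by
    rw [hKdef, ← hP, Matrix.mul_sub, Matrix.sub_mul]
    simp only [Matrix.mul_assoc]
  have key : IsNormalM (Qᴴ * M * Q) ↔ Qᴴ * K * Q = 0 := by
    unfold IsNormalM
    rw [Matrix.star_eq_conjTranspose, Matrix.conjTranspose_mul, Matrix.conjTranspose_mul,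
      Matrix.conjTranspose_conjTranspose, expand, sub_eq_zero]
    constructor <;> intro h <;>
      · simp only [Matrix.mul_assoc] at h ⊢
        exact h
  rw [key]
  constructor
  · intro h
    have : P * K * P = Q * (Qᴴ * K * Q) * Qᴴ := by
      rw [← hP]
      simp only [Matrix.mul_assoc]
    rw [this, h]
    simp
  · intro h
    have : Qᴴ * K * Q = Qᴴ * (P * K * P) * Q := by
      rw [show Qᴴ * (P * K * P) * Q = (Qᴴ * P) * K * (P * Q) by simp only [Matrix.mul_assoc],
        hQP, hPQ]
    rw [this, h]
    simp

open Kronecker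

lemma sub_kron {l m p q : Type*} (A B : Matrix l m ℂ) (C : Matrix p q ℂ) :
    (A - B) ⊗ₖ C = A ⊗ₖ C - B ⊗ₖ C := by
  ext ⟨i, s⟩ ⟨j, t⟩
  simp [Matrix.kroneckerMap_apply, sub_mul]

lemma kron_conjT {l m p q : Type*} (A : Matrix l m ℂ) (C : Matrix p q ℂ) :
    (A ⊗ₖ C)ᴴ = Aᴴ ⊗ₖ Cᴴ := by
  ext ⟨i, s⟩ ⟨j, t⟩
  simp [Matrix.kroneckerMap_apply, Matrix.conjTranspose_apply, mul_comm]

lemma lapC_eq {n : ℕ} (A : Matrix (Fin n) (Fin n) ℝ) :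
    lapC A = Matrix.diagonal (fun i => ((∑ j, A i j : ℝ) : ℂ)) - A.map (fun x => (x : ℂ)) := by
  ext i j
  simp only [lapC, lap, Matrix.map_apply, Matrix.sub_apply, Matrix.diagonal_apply]
  push_cast
  split_ifs <;> simp

lemma lapC_hat {n k : ℕ} (A : Matrix (Fin n) (Fin n) ℝ)
    (Ahat : Matrix (Fin n × Fin k) (Fin n × Fin k) ℝ)
    (hAhat : ∀ p q : Fin n × Fin k, Ahat p q = A p.1 q.1) :
    lapC Ahat = ((k : ℂ) • Matrix.diagonal (fun i => ((∑ j, A i j : ℝ) : ℂ)))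
        ⊗ₖ (1 : Matrix (Fin k) (Fin k) ℂ)
      - (A.map (fun x => (x : ℂ))) ⊗ₖ allJ (Fin k) := by
  ext ⟨i, p⟩ ⟨j, q⟩
  simp only [lapC, lap, Matrix.map_apply, Matrix.sub_apply, Matrix.diagonal_apply,
    Matrix.kroneckerMap_apply, Matrix.smul_apply, allJ, Matrix.of_apply, Matrix.one_apply,
    hAhat]
  have hrow : ∑ x : Fin n × Fin k, A i x.1 = (k : ℝ) * ∑ j, A i j := by
    rw [Fintype.sum_prod_type]
    simp [Finset.sum_const, Finset.mul_sum, mul_comm]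
    rw [Finset.sum_mul]
  rw [hrow]
  by_cases hij : i = j
  · by_cases hpq : p = q
    · subst hij; subst hpq
      simp
    · have : ¬ ((i, p) = (j, q)) := by simp [Prod.ext_iff, hpq]
      simp [this, hij, hpq]
  · have : ¬ ((i, p) = (j, q)) := by simp [Prod.ext_iff, hij]
    simp [this, hij]

lemma kron_sub {l m p q : Type*} (C : Matrix l m ℂ) (A B : Matrix p q ℂ) :
    C ⊗ₖ (A - B) = C ⊗ₖ A - C ⊗ₖ B := by
  ext ⟨i, s⟩ ⟨j, t⟩
  simp [Matrix.kroneckerMap_apply, mul_sub]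

lemma allJ_kron (n k : ℕ) : allJ (Fin n × Fin k) = allJ (Fin n) ⊗ₖ allJ (Fin k) := by
  ext ⟨i, p⟩ ⟨j, q⟩
  simp [allJ, Matrix.kroneckerMap_apply]

lemma allJ_conjT (m : Type*) : (allJ m)ᴴ = allJ m := by
  ext i j; simp [allJ, Matrix.conjTranspose_apply]

lemma allJ_mul_allJ {m : ℕ} : allJ (Fin m) * allJ (Fin m) = (m : ℂ) • allJ (Fin m) := by
  ext i j
  simp [allJ, Matrix.mul_apply, Finset.sum_const]

lemma key_kron {n k : ℕ} (hn : 1 ≤ n) (hk : 1 ≤ k) (A : Matrix (Fin n) (Fin n) ℝ)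
    (Ahat : Matrix (Fin n × Fin k) (Fin n × Fin k) ℝ)
    (hAhat : ∀ p q : Fin n × Fin k, Ahat p q = A p.1 q.1)
    (h : (1 - ((n : ℂ))⁻¹ • allJ (Fin n)) *
        ((lapC A)ᴴ * ((1 - ((n : ℂ))⁻¹ • allJ (Fin n)) * lapC A)
          - lapC A * ((1 - ((n : ℂ))⁻¹ • allJ (Fin n)) * (lapC A)ᴴ)) *
        (1 - ((n : ℂ))⁻¹ • allJ (Fin n)) = 0) :
    (1 - ((↑(n * k) : ℂ))⁻¹ • allJ (Fin n × Fin k)) *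
        ((lapC Ahat)ᴴ * ((1 - ((↑(n * k) : ℂ))⁻¹ • allJ (Fin n × Fin k)) * lapC Ahat)
          - lapC Ahat * ((1 - ((↑(n * k) : ℂ))⁻¹ • allJ (Fin n × Fin k)) * (lapC Ahat)ᴴ)) *
        (1 - ((↑(n * k) : ℂ))⁻¹ • allJ (Fin n × Fin k)) = 0 := by
  have hkc : (k : ℂ) ≠ 0 := Nat.cast_ne_zero.2 (by omega)
  have hnc : (n : ℂ) ≠ 0 := Nat.cast_ne_zero.2 (by omega)
  set D : Matrix (Fin n) (Fin n) ℂ := Matrix.diagonal (fun i => ((∑ j, A i j : ℝ) : ℂ)) with hD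
  set Ac : Matrix (Fin n) (Fin n) ℂ := A.map (fun x => (x : ℂ)) with hAc
  set Jk : Matrix (Fin k) (Fin k) ℂ := allJ (Fin k) with hJk
  set Jn : Matrix (Fin n) (Fin n) ℂ := allJ (Fin n) with hJn
  set L : Matrix (Fin n) (Fin n) ℂ := lapC A with hLdef
  have hL : L = D - Ac := lapC_eq A
  have hDH : Dᴴ = D := by
    ext i j
    rw [hD]
    simp only [Matrix.conjTranspose_apply, Matrix.diagonal_apply]
    split_ifs with h1 h2 h3
    · subst h1; exact Complex.conj_ofReal _
    · exact absurd h1.symm h2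
    · exact absurd h3.symm h1
    · simp
  have hLH : Lᴴ = D - Acᴴ := by rw [hL, Matrix.conjTranspose_sub, hDH]
  have hkD : ((k : ℂ) • D)ᴴ = (k : ℂ) • D := by
    rw [Matrix.conjTranspose_smul, hDH, star_natCast]
  set Lh : Matrix (Fin n × Fin k) (Fin n × Fin k) ℂ := lapC Ahat with hLhdef
  have hLh : Lh = ((k : ℂ) • D) ⊗ₖ (1 : Matrix (Fin k) (Fin k) ℂ) - Ac ⊗ₖ Jk :=
    lapC_hat A Ahat hAhat
  have hLhH : Lhᴴ = ((k : ℂ) • D) ⊗ₖ (1 : Matrix (Fin k) (Fin k) ℂ) - Acᴴ ⊗ₖ Jk := by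
    rw [hLh, Matrix.conjTranspose_sub, kron_conjT, kron_conjT, hkD, Matrix.conjTranspose_one,
      hJk, allJ_conjT]
  have hJJ : Jk * Jk = (k : ℂ) • Jk := allJ_mul_allJ
  have hJnJn : Jn * Jn = (n : ℂ) • Jn := allJ_mul_allJ
  set Gk : Matrix (Fin k) (Fin k) ℂ := ((k : ℂ))⁻¹ • Jk with hGk
  have hJkGk : Jk * Gk = Jk := by
    rw [hGk, Matrix.mul_smul, hJJ, smul_smul, inv_mul_cancel₀ hkc, one_smul]
  have hGkJk : Gk * Jk = Jk := by
    rw [hGk, Matrix.smul_mul, hJJ, smul_smul, inv_mul_cancel₀ hkc, one_smul]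
  have hGkGk : Gk * Gk = Gk := by rw [hGk, Matrix.smul_mul, hJkGk]
  set Ek : Matrix (Fin k) (Fin k) ℂ := 1 - Gk with hEk
  have hJE : Jk * Ek = 0 := by
    rw [hEk, Matrix.mul_sub, Matrix.mul_one, hJkGk, sub_self]
  have hEJ : Ek * Jk = 0 := by
    rw [hEk, Matrix.sub_mul, Matrix.one_mul, hGkJk, sub_self]
  have hGkE : Gk * Ek = 0 := by
    rw [hEk, Matrix.mul_sub, Matrix.mul_one, hGkGk, sub_self]
  have hEE : Ek * Ek = Ek := by
    nth_rewrite 1 [hEk]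
    rw [Matrix.sub_mul, Matrix.one_mul, hGkE, sub_zero]
  set Pn : Matrix (Fin n) (Fin n) ℂ := 1 - ((n : ℂ))⁻¹ • Jn with hPn
  have hJnPn : Jn * Pn = 0 := by
    rw [hPn, Matrix.mul_sub, Matrix.mul_one, Matrix.mul_smul, hJnJn, smul_smul,
      inv_mul_cancel₀ hnc, one_smul, sub_self]
  have hPnPn : Pn * Pn = Pn := by
    nth_rewrite 1 [hPn]
    rw [Matrix.sub_mul, Matrix.one_mul, Matrix.smul_mul, hJnPn, smul_zero, sub_zero]
  set S : Matrix (Fin n × Fin k) (Fin n × Fin k) ℂ := (1 : Matrix (Fin n) (Fin n) ℂ) ⊗ₖ Ek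
    with hS
  set G : Matrix (Fin n × Fin k) (Fin n × Fin k) ℂ := Pn ⊗ₖ Gk with hG
  have hsplit : (1 : Matrix (Fin n × Fin k) (Fin n × Fin k) ℂ)
      - ((↑(n * k) : ℂ))⁻¹ • allJ (Fin n × Fin k) = S + G := by
    have hcast : ((↑(n * k) : ℂ))⁻¹ = (n : ℂ)⁻¹ * (k : ℂ)⁻¹ := by
      push_cast
      rw [mul_inv]
    rw [hcast, allJ_kron, hS, hG, hEk, hPn, hGk, kron_sub, sub_kron, Matrix.one_kronecker_one,
      Matrix.kronecker_smul, Matrix.smul_kronecker, Matrix.kronecker_smul, smul_smul,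
      ← hJk, ← hJn]
    abel
  set H : Matrix (Fin n × Fin k) (Fin n × Fin k) ℂ := ((k : ℂ) • D) ⊗ₖ Ek with hH
  have hLS : Lh * S = H := by
    rw [hLh, hS, Matrix.sub_mul, ← Matrix.mul_kronecker_mul, ← Matrix.mul_kronecker_mul,
      Matrix.mul_one, Matrix.one_mul, hJE, Matrix.kronecker_zero, sub_zero, hH]
  have hSL : S * Lh = H := by
    rw [hLh, hS, Matrix.mul_sub, ← Matrix.mul_kronecker_mul, ← Matrix.mul_kronecker_mul,
      Matrix.mul_one, Matrix.one_mul, hEJ, Matrix.kronecker_zero, sub_zero, hH]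
  have hLHS : Lhᴴ * S = H := by
    rw [hLhH, hS, Matrix.sub_mul, ← Matrix.mul_kronecker_mul, ← Matrix.mul_kronecker_mul,
      Matrix.mul_one, Matrix.one_mul, hJE, Matrix.kronecker_zero, sub_zero, hH]
  have hSLH : S * Lhᴴ = H := by
    rw [hLhH, hS, Matrix.mul_sub, ← Matrix.mul_kronecker_mul, ← Matrix.mul_kronecker_mul,
      Matrix.mul_one, Matrix.one_mul, hEJ, Matrix.kronecker_zero, sub_zero, hH]
  have hSS : S * S = S := by
    rw [hS, ← Matrix.mul_kronecker_mul, Matrix.mul_one, hEE]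
  have hGG : G * G = G := by
    rw [hG, ← Matrix.mul_kronecker_mul, hPnPn, hGkGk]
  have hLG : Lh * G = (L * Pn) ⊗ₖ Jk := by
    rw [hLh, hG, Matrix.sub_mul, ← Matrix.mul_kronecker_mul, ← Matrix.mul_kronecker_mul,
      Matrix.one_mul, hJkGk, Matrix.smul_mul, Matrix.smul_kronecker, hGk,
      Matrix.kronecker_smul, smul_smul, mul_inv_cancel₀ hkc, one_smul, ← sub_kron,
      ← Matrix.sub_mul, ← hL]
  have hGL : G * Lh = (Pn * L) ⊗ₖ Jk := by
    rw [hLh, hG, Matrix.mul_sub, ← Matrix.mul_kronecker_mul, ← Matrix.mul_kronecker_mul,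
      Matrix.mul_one, hGkJk, Matrix.mul_smul, Matrix.smul_kronecker, hGk,
      Matrix.kronecker_smul, smul_smul, mul_inv_cancel₀ hkc, one_smul, ← sub_kron,
      ← Matrix.mul_sub, ← hL]
  have hLHG : Lhᴴ * G = (Lᴴ * Pn) ⊗ₖ Jk := by
    rw [hLhH, hG, Matrix.sub_mul, ← Matrix.mul_kronecker_mul, ← Matrix.mul_kronecker_mul,
      Matrix.one_mul, hJkGk, Matrix.smul_mul, Matrix.smul_kronecker, hGk,
      Matrix.kronecker_smul, smul_smul, mul_inv_cancel₀ hkc, one_smul, ← sub_kron,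
      ← Matrix.sub_mul, ← hLH]
  have hGLH : G * Lhᴴ = (Pn * Lᴴ) ⊗ₖ Jk := by
    rw [hLhH, hG, Matrix.mul_sub, ← Matrix.mul_kronecker_mul, ← Matrix.mul_kronecker_mul,
      Matrix.mul_one, hGkJk, Matrix.mul_smul, Matrix.smul_kronecker, hGk,
      Matrix.kronecker_smul, smul_smul, mul_inv_cancel₀ hkc, one_smul, ← sub_kron,
      ← Matrix.mul_sub, ← hLH]
  have e1 : Lhᴴ * ((S + G) * Lh) = H * H + (Lᴴ * (Pn * L)) ⊗ₖ ((k : ℂ) • Jk) := by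
    rw [Matrix.add_mul, Matrix.mul_add, hSL, hGL]
    congr 1
    · calc Lhᴴ * H = Lhᴴ * (S * Lh) := by rw [hSL]
        _ = Lhᴴ * (S * (S * Lh)) := by rw [← Matrix.mul_assoc S S Lh, hSS]
        _ = (Lhᴴ * S) * (S * Lh) := (Matrix.mul_assoc _ _ _).symm
        _ = H * H := by rw [hLHS, hSL]
    · calc Lhᴴ * ((Pn * L) ⊗ₖ Jk) = Lhᴴ * (G * Lh) := by rw [hGL]
        _ = Lhᴴ * (G * (G * Lh)) := by rw [← Matrix.mul_assoc G G Lh, hGG]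
        _ = (Lhᴴ * G) * (G * Lh) := (Matrix.mul_assoc _ _ _).symm
        _ = ((Lᴴ * Pn) * (Pn * L)) ⊗ₖ (Jk * Jk) := by
            rw [hLHG, hGL, Matrix.mul_kronecker_mul]
        _ = (Lᴴ * (Pn * L)) ⊗ₖ ((k : ℂ) • Jk) := by
            rw [hJJ, Matrix.mul_assoc Lᴴ Pn (Pn * L), ← Matrix.mul_assoc Pn Pn L, hPnPn]
  have e2 : Lh * ((S + G) * Lhᴴ) = H * H + (L * (Pn * Lᴴ)) ⊗ₖ ((k : ℂ) • Jk) := by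
    rw [Matrix.add_mul, Matrix.mul_add, hSLH, hGLH]
    congr 1
    · calc Lh * H = Lh * (S * Lhᴴ) := by rw [hSLH]
        _ = Lh * (S * (S * Lhᴴ)) := by rw [← Matrix.mul_assoc S S Lhᴴ, hSS]
        _ = (Lh * S) * (S * Lhᴴ) := (Matrix.mul_assoc _ _ _).symm
        _ = H * H := by rw [hLS, hSLH]
    · calc Lh * ((Pn * Lᴴ) ⊗ₖ Jk) = Lh * (G * Lhᴴ) := by rw [hGLH]
        _ = Lh * (G * (G * Lhᴴ)) := by rw [← Matrix.mul_assoc G G Lhᴴ, hGG]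
        _ = (Lh * G) * (G * Lhᴴ) := (Matrix.mul_assoc _ _ _).symm
        _ = ((L * Pn) * (Pn * Lᴴ)) ⊗ₖ (Jk * Jk) := by
            rw [hLG, hGLH, Matrix.mul_kronecker_mul]
        _ = (L * (Pn * Lᴴ)) ⊗ₖ ((k : ℂ) • Jk) := by
            rw [hJJ, Matrix.mul_assoc L Pn (Pn * Lᴴ), ← Matrix.mul_assoc Pn Pn Lᴴ, hPnPn]
  rw [hsplit, e1, e2]
  have hKhat : H * H + (Lᴴ * (Pn * L)) ⊗ₖ ((k : ℂ) • Jk)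
      - (H * H + (L * (Pn * Lᴴ)) ⊗ₖ ((k : ℂ) • Jk))
      = (Lᴴ * (Pn * L) - L * (Pn * Lᴴ)) ⊗ₖ ((k : ℂ) • Jk) := by
    rw [sub_kron]
    abel
  rw [hKhat]
  set Kn : Matrix (Fin n) (Fin n) ℂ := Lᴴ * (Pn * L) - L * (Pn * Lᴴ) with hKn
  have hSX : S * (Kn ⊗ₖ ((k : ℂ) • Jk)) = 0 := by
    rw [hS, ← Matrix.mul_kronecker_mul, Matrix.one_mul, Matrix.mul_smul, hEJ, smul_zero,
      Matrix.kronecker_zero]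
  have hGX : G * (Kn ⊗ₖ ((k : ℂ) • Jk)) = (Pn * Kn) ⊗ₖ ((k : ℂ) • Jk) := by
    rw [hG, ← Matrix.mul_kronecker_mul, Matrix.mul_smul, hGkJk]
  have hXS : ((Pn * Kn) ⊗ₖ ((k : ℂ) • Jk)) * S = 0 := by
    rw [hS, ← Matrix.mul_kronecker_mul, Matrix.mul_one, Matrix.smul_mul, hJE, smul_zero,
      Matrix.kronecker_zero]
  have hXG : ((Pn * Kn) ⊗ₖ ((k : ℂ) • Jk)) * G = 0 := by
    rw [hG, ← Matrix.mul_kronecker_mul, Matrix.smul_mul, hJkGk, h,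
      Matrix.zero_kronecker]
  rw [Matrix.add_mul, hSX, zero_add, hGX, Matrix.mul_add, hXS, hXG, add_zero]

lemma part1 {n k : ℕ} (hk : 1 ≤ k) (A : Matrix (Fin n) (Fin n) ℝ)
    (Ahat : Matrix (Fin n × Fin k) (Fin n × Fin k) ℝ)
    (hAhat : ∀ p q : Fin n × Fin k, Ahat p q = A p.1 q.1)
    (hN : IsNormalM (lap Ahat)) : IsNormalM (lap A) := by
  classical
  set P : Matrix (Fin n × Fin k) (Fin n) ℝ :=
    Matrix.of (fun x j => if x.1 = j then (1 : ℝ) else 0) with hP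
  have hrow : ∀ (i : Fin n) (p : Fin k),
      (∑ x : Fin n × Fin k, A i x.1) = (k : ℝ) * ∑ t, A i t := by
    intro i p
    rw [Fintype.sum_prod_type]
    simp [Finset.sum_const, Finset.mul_sum, mul_comm]
    rw [Finset.sum_mul]
  have hlapAhat : ∀ (i j : Fin n) (p q : Fin k), lap Ahat (i, p) (j, q)
      = (if (i, p) = (j, q) then (k : ℝ) * ∑ t, A i t else 0) - A i j := by
    intro i j p q
    simp only [lap, Matrix.sub_apply, Matrix.diagonal_apply, hAhat]
    congr 1
    split_ifs with h
    · exact hrow i p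
    · rfl
  have collapse : ∀ (f : Fin n × Fin k → ℝ) (j : Fin n),
      (∑ x : Fin n × Fin k, f x * P x j) = ∑ r, f (j, r) := by
    intro f j
    rw [Fintype.sum_prod_type]
    rw [Finset.sum_comm]
    refine Finset.sum_congr rfl fun r _ => ?_
    have : ∀ l, f (l, r) * P (l, r) j = if l = j then f (l, r) else 0 := by
      intro l
      simp only [hP, Matrix.of_apply]
      split_ifs <;> simp
    rw [Finset.sum_congr rfl fun l _ => this l, Finset.sum_ite_eq' Finset.univ j]
    simp
  have h1 : lap Ahat * P = (k : ℝ) • (P * lap A) := by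
    ext ⟨i, p⟩ j
    rw [Matrix.smul_apply, Matrix.mul_apply, Matrix.mul_apply, collapse]
    have hPl : ∀ l, P (i, p) l * lap A l j = if l = i then lap A l j else 0 := by
      intro l
      simp only [hP, Matrix.of_apply]
      split_ifs with h h' h' <;> simp_all
    rw [Finset.sum_congr rfl fun l _ => hPl l, Finset.sum_ite_eq' Finset.univ i]
    simp only [Finset.mem_univ, if_true]
    rw [Finset.sum_congr rfl fun r _ => hlapAhat i j p r, Finset.sum_sub_distrib,
      Finset.sum_const, Finset.card_univ, Fintype.card_fin]
    simp only [lap, Matrix.sub_apply, Matrix.diagonal_apply, smul_eq_mul]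
    by_cases hij : i = j
    · subst hij
      have he : ∀ r : Fin k, ((i, p) = (i, r)) = (p = r) := by
        intro r; simp [Prod.ext_iff]
      simp only [he]
      rw [Finset.sum_ite_eq Finset.univ p (fun _ => (k : ℝ) * ∑ t, A i t)]
      simp only [Finset.mem_univ, if_true, if_pos rfl, smul_eq_mul]
      ring
    · have : ∀ r : Fin k, ((i, p) = (j, r)) = False := by
        intro r; simp [Prod.ext_iff, hij]
      simp only [this, if_false]
      simp [hij]
  have h2 : (lap Ahat)ᴴ * P = (k : ℝ) • (P * (lap A)ᴴ) := by
    ext ⟨i, p⟩ j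
    rw [Matrix.smul_apply, Matrix.mul_apply, Matrix.mul_apply,
      collapse (fun x => (lap Ahat)ᴴ (i, p) x) j]
    have hPl : ∀ l, P (i, p) l * (lap A)ᴴ l j = if l = i then (lap A)ᴴ l j else 0 := by
      intro l
      simp only [hP, Matrix.of_apply]
      split_ifs with h h' h' <;> simp_all
    rw [Finset.sum_congr rfl fun l _ => hPl l, Finset.sum_ite_eq' Finset.univ i]
    simp only [Finset.mem_univ, if_true, Matrix.conjTranspose_apply, star_trivial]
    rw [Finset.sum_congr rfl fun r _ => hlapAhat j i r p, Finset.sum_sub_distrib,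
      Finset.sum_const, Finset.card_univ, Fintype.card_fin]
    simp only [lap, Matrix.sub_apply, Matrix.diagonal_apply, smul_eq_mul]
    by_cases hij : j = i
    · subst hij
      have he : ∀ r : Fin k, ((j, r) = (j, p)) = (r = p) := by
        intro r; simp [Prod.ext_iff]
      simp only [he]
      rw [Finset.sum_ite_eq' Finset.univ p (fun _ => (k : ℝ) * ∑ t, A j t)]
      simp only [Finset.mem_univ, if_true, if_pos rfl, smul_eq_mul]
      ring
    · have he : ∀ r : Fin k, ((j, r) = (i, p)) = False := by
        intro r; simp [Prod.ext_iff, hij]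
      simp only [he, if_false]
      simp [hij]
  have h3 : Pᴴ * P = (k : ℝ) • (1 : Matrix (Fin n) (Fin n) ℝ) := by
    ext j j'
    rw [Matrix.smul_apply, Matrix.mul_apply]
    simp only [Matrix.conjTranspose_apply, star_trivial]
    rw [collapse (fun x => P x j) j']
    simp only [hP, Matrix.of_apply, Matrix.one_apply, smul_eq_mul]
    by_cases hjj : j = j'
    · subst hjj; simp [Finset.sum_const]
    · simp [Ne.symm hjj, hjj]
  rw [IsNormalM, Matrix.star_eq_conjTranspose] at hN
  have c1 : (lap Ahat)ᴴ * lap Ahat * P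
      = ((k : ℝ) * (k : ℝ)) • (P * ((lap A)ᴴ * lap A)) := by
    rw [Matrix.mul_assoc, h1, Matrix.mul_smul, ← Matrix.mul_assoc, h2, Matrix.smul_mul,
      smul_smul, Matrix.mul_assoc]
  have c2 : lap Ahat * (lap Ahat)ᴴ * P
      = ((k : ℝ) * (k : ℝ)) • (P * (lap A * (lap A)ᴴ)) := by
    rw [Matrix.mul_assoc, h2, Matrix.mul_smul, ← Matrix.mul_assoc, h1, Matrix.smul_mul,
      smul_smul, Matrix.mul_assoc]
  have e1 : Pᴴ * ((lap Ahat)ᴴ * lap Ahat * P)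
      = ((k : ℝ) * (k : ℝ) * (k : ℝ)) • ((lap A)ᴴ * lap A) := by
    rw [c1, Matrix.mul_smul, ← Matrix.mul_assoc, h3, Matrix.smul_mul, Matrix.one_mul,
      smul_smul, mul_comm ((k : ℝ) * (k : ℝ))]
  have e2 : Pᴴ * (lap Ahat * (lap Ahat)ᴴ * P)
      = ((k : ℝ) * (k : ℝ) * (k : ℝ)) • (lap A * (lap A)ᴴ) := by
    rw [c2, Matrix.mul_smul, ← Matrix.mul_assoc, h3, Matrix.smul_mul, Matrix.one_mul,
      smul_smul, mul_comm ((k : ℝ) * (k : ℝ))]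
  have main : ((k : ℝ) * (k : ℝ) * (k : ℝ)) • ((lap A)ᴴ * lap A)
      = ((k : ℝ) * (k : ℝ) * (k : ℝ)) • (lap A * (lap A)ᴴ) := by
    rw [← e1, ← e2, hN]
  have hk3 : ((k : ℝ) * (k : ℝ) * (k : ℝ)) ≠ 0 := by
    have : (k : ℝ) ≠ 0 := Nat.cast_ne_zero.2 (by omega)
    positivity
  have := smul_right_injective (Matrix (Fin n) (Fin n) ℝ) hk3 main
  rw [IsNormalM, Matrix.star_eq_conjTranspose]
  exact this


/-- If `Γ` is restricted-normal of order `n`, then for `k ≥ 1` the digraph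
on `Fin n × Fin k` with adjacency matrix `A ⊗ J_k` is restricted-normal of order `nk`;
moreover, it is a directed join iff `Γ` is a directed join. -/
theorem restricted_normal_kronecker {n k : ℕ} (hk : 1 ≤ k)
    (A : Matrix (Fin n) (Fin n) ℝ) (hA : IsAdj A)
    (Q : Matrix (Fin n) (Fin (n - 1)) ℂ) (hQ : IsRestrictor Q)
    (hrn : IsNormalM (Qᴴ * lapC A * Q)) (hnn : ¬ IsNormalM (lap A))
    (Ahat : Matrix (Fin n × Fin k) (Fin n × Fin k) ℝ)
    (hAhat : ∀ p q : Fin n × Fin k, Ahat p q = A p.1 q.1) :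
    ¬ IsNormalM (lap Ahat) ∧
    (∀ Qhat : Matrix (Fin n × Fin k) (Fin (n * k - 1)) ℂ, IsRestrictor Qhat →
      IsNormalM (Qhatᴴ * lapC Ahat * Qhat)) ∧
    ((∃ S : Finset (Fin n × Fin k), S.Nonempty ∧ S ≠ Finset.univ ∧
        ∀ u ∈ S, ∀ v ∉ S, Ahat u v = 1 ∧ Ahat v u = 0) ↔
      (∃ S : Finset (Fin n), S.Nonempty ∧ S ≠ Finset.univ ∧
        ∀ u ∈ S, ∀ v ∉ S, A u v = 1 ∧ A v u = 0)) := by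
  classical
  have hn : 1 ≤ n := by
    by_contra hn0
    push_neg at hn0
    obtain rfl : n = 0 := by omega
    exact hnn (show star (lap A) * lap A = lap A * star (lap A) by
      ext i j; exact i.elim0)
  refine ⟨?_, ?_, ?_⟩
  · intro hN
    exact hnn (part1 hk A Ahat hAhat hN)
  · intro Qhat hQhat
    have hcard : Fintype.card (Fin n × Fin k) = n * k := by simp
    have hnk : 1 ≤ n * k := Nat.one_le_iff_ne_zero.2 (by positivity)
    rw [normal_sandwich hcard hnk Qhat hQhat (lapC Ahat)]
    apply key_kron hn hk A Ahat hAhat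
    have hcardn : Fintype.card (Fin n) = n := by simp
    rw [← normal_sandwich hcardn hn Q hQ (lapC A)]
    exact hrn
  · constructor
    · rintro ⟨T, hTne, hTnu, hT⟩
      have sat : ∀ (i : Fin n) (p q : Fin k), (i, p) ∈ T → (i, q) ∈ T := by
        intro i p q hp
        by_contra hq
        have h1 := (hT (i, p) hp (i, q) hq).1
        rw [hAhat] at h1
        simp only [hA.2 i] at h1
        exact zero_ne_one h1
      refine ⟨T.image Prod.fst, hTne.image _, ?_, ?_⟩
      · have : ∃ x, x ∉ T := by
          by_contra hx
          push_neg at hx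
          exact hTnu (Finset.eq_univ_iff_forall.mpr hx)
        obtain ⟨⟨j, q⟩, hx⟩ := this
        intro hSu
        have hjS : j ∈ T.image Prod.fst := hSu ▸ Finset.mem_univ j
        obtain ⟨⟨j', p⟩, hmem, heq⟩ := Finset.mem_image.1 hjS
        rw [show j' = j from heq] at hmem
        exact hx (sat j p q hmem)
      · intro u hu v hv
        obtain ⟨⟨u', p⟩, hmem, heq⟩ := Finset.mem_image.1 hu
        rw [show u' = u from heq] at hmem
        have hq0 : (v, (⟨0, hk⟩ : Fin k)) ∉ T := fun hm =>
          hv (Finset.mem_image.2 ⟨_, hm, rfl⟩)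
        have h2 := hT (u, p) hmem (v, ⟨0, hk⟩) hq0
        rwa [hAhat, hAhat] at h2
    · rintro ⟨S, hSne, hSnu, hS⟩
      refine ⟨S ×ˢ Finset.univ, hSne.product ⟨⟨0, hk⟩, Finset.mem_univ _⟩, ?_, ?_⟩
      · have : ∃ x, x ∉ S := by
          by_contra hx
          push_neg at hx
          exact hSnu (Finset.eq_univ_iff_forall.mpr hx)
        obtain ⟨v, hv⟩ := this
        intro he
        have hmem : (v, (⟨0, hk⟩ : Fin k)) ∈ S ×ˢ Finset.univ := he ▸ Finset.mem_univ _
        exact hv (Finset.mem_product.1 hmem).1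
      · rintro ⟨u, p⟩ hu ⟨v, q⟩ hv
        have hu' : u ∈ S := (Finset.mem_product.1 hu).1
        have hv' : v ∉ S := fun h => hv (Finset.mem_product.2 ⟨h, Finset.mem_univ _⟩)
        have h3 := hS u hu' v hv'
        rw [hAhat, hAhat]
        exact h3
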